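/- arXiv:2109.04445 — 4 statements merged into one kernel-verified Lean document; each statement's English description precedes it below -/
import Mathlib

section
/- Let G be a finite abelian group, L ∈ ℤ^{k×d} a matrix, and f : G → [0,1]. Then there exists a set A ⊆ G with |A| ≥ E(f)·|G| − 1 and t_L(A) ≤ t_L(f) + |C^#(L) ∩ A^d| / |C(L)|. -/
open Finset

variable {G : Type*} [AddCommGroup G] [Fintype G] [DecidableEq G]

set_option linter.unusedSectionVars false

section Aux
variable {d : ℕ}

private lemma chord_term (p : G → ℝ) (hp : ∀ x, 0 ≤ p x) {a b : G} (hab : a ≠ b) (s : ℝ)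
    {ul u0 ur : ℝ} (h1 : ul ≤ u0) (h2 : u0 ≤ ur) (v : Fin d → G) (hv : Function.Injective v) :
    (ur - u0) * ∏ i, Function.update (Function.update p a ul) b (s - ul) (v i)
      + (u0 - ul) * ∏ i, Function.update (Function.update p a ur) b (s - ur) (v i)
    ≤ (ur - ul) * ∏ i, Function.update (Function.update p a u0) b (s - u0) (v i) := by
  have key : ∀ (u : ℝ) (x : G), x ≠ a → x ≠ b →
      Function.update (Function.update p a u) b (s - u) x = p x := by
    intro u x hxa hxb
    rw [Function.update_of_ne hxb, Function.update_of_ne hxa]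
  have keya : ∀ u : ℝ, Function.update (Function.update p a u) b (s - u) a = u := by
    intro u; rw [Function.update_of_ne hab, Function.update_self]
  have keyb : ∀ u : ℝ, Function.update (Function.update p a u) b (s - u) b = s - u := by
    intro u; rw [Function.update_self]
  by_cases ha : ∃ ia, v ia = a
  · obtain ⟨ia, hia⟩ := ha
    by_cases hb : ∃ ib, v ib = b
    · obtain ⟨ib, hib⟩ := hb
      have hne : ib ≠ ia := by
        rintro rfl; exact hab (hia ▸ hib ▸ rfl)
      have hprod : ∀ u : ℝ, ∏ i, Function.update (Function.update p a u) b (s - u) (v i)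
          = u * ((s - u) * ∏ i ∈ (univ.erase ia).erase ib, p (v i)) := by
        intro u
        rw [← Finset.mul_prod_erase univ _ (mem_univ ia), hia, keya,
          ← Finset.mul_prod_erase _ _ (mem_erase.mpr ⟨hne, mem_univ ib⟩), hib, keyb]
        congr 2
        refine Finset.prod_congr rfl fun i hi => ?_
        have hi' := mem_erase.mp hi
        have hi'' := mem_erase.mp hi'.2
        exact key u _ (fun h => hi''.1 (hv (h.trans hia.symm)))
          (fun h => hi'.1 (hv (h.trans hib.symm)))
      rw [hprod, hprod, hprod]
      set c := ∏ i ∈ (univ.erase ia).erase ib, p (v i) with hc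
      have hc0 : 0 ≤ c := Finset.prod_nonneg fun i _ => hp _
      have hident : (ur - ul) * (u0 * ((s - u0) * c))
          - ((ur - u0) * (ul * ((s - ul) * c)) + (u0 - ul) * (ur * ((s - ur) * c)))
          = c * ((ur - u0) * ((u0 - ul) * (ur - ul))) := by ring
      have hnn : 0 ≤ c * ((ur - u0) * ((u0 - ul) * (ur - ul))) := by
        have := sub_nonneg.mpr h1
        have := sub_nonneg.mpr h2
        have := sub_nonneg.mpr (h1.trans h2)
        positivity
      linarith
    · push_neg at hb
      have hprod : ∀ u : ℝ, ∏ i, Function.update (Function.update p a u) b (s - u) (v i)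
          = u * ∏ i ∈ univ.erase ia, p (v i) := by
        intro u
        rw [← Finset.mul_prod_erase univ _ (mem_univ ia), hia, keya]
        congr 1
        refine Finset.prod_congr rfl fun i hi => ?_
        exact key u _ (fun h => (mem_erase.mp hi).1 (hv (h.trans hia.symm))) (fun h => hb i h)
      rw [hprod, hprod, hprod]
      exact le_of_eq (by ring)
  · push_neg at ha
    by_cases hb : ∃ ib, v ib = b
    · obtain ⟨ib, hib⟩ := hb
      have hprod : ∀ u : ℝ, ∏ i, Function.update (Function.update p a u) b (s - u) (v i)
          = (s - u) * ∏ i ∈ univ.erase ib, p (v i) := by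
        intro u
        rw [← Finset.mul_prod_erase univ _ (mem_univ ib), hib, keyb]
        congr 1
        refine Finset.prod_congr rfl fun i hi => ?_
        exact key u _ (fun h => ha i h) (fun h => (mem_erase.mp hi).1 (hv (h.trans hib.symm)))
      rw [hprod, hprod, hprod]
      exact le_of_eq (by ring)
    · push_neg at hb
      have hprod : ∀ u : ℝ, ∏ i, Function.update (Function.update p a u) b (s - u) (v i)
          = ∏ i, p (v i) := by
        intro u
        exact Finset.prod_congr rfl fun i _ => key u _ (fun h => ha i h) (fun h => hb i h)
      rw [hprod, hprod, hprod]
      exact le_of_eq (by ring)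

end Aux

section Aux2
set_option linter.unusedSectionVars false
variable {d : ℕ}

private lemma chord_sum (S : Finset (Fin d → G)) (hS : ∀ v ∈ S, Function.Injective v)
    (p : G → ℝ) (hp : ∀ x, 0 ≤ p x) {a b : G} (hab : a ≠ b) (s : ℝ)
    {ul u0 ur : ℝ} (h1 : ul ≤ u0) (h2 : u0 ≤ ur) :
    (ur - u0) * ∑ v ∈ S, ∏ i, Function.update (Function.update p a ul) b (s - ul) (v i)
      + (u0 - ul) * ∑ v ∈ S, ∏ i, Function.update (Function.update p a ur) b (s - ur) (v i)
    ≤ (ur - ul) * ∑ v ∈ S, ∏ i, Function.update (Function.update p a u0) b (s - u0) (v i) := by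
  rw [Finset.mul_sum, Finset.mul_sum, Finset.mul_sum, ← Finset.sum_add_distrib]
  exact Finset.sum_le_sum fun v hv => chord_term p hp hab s h1 h2 v (hS v hv)

private lemma base_case (S : Finset (Fin d → G)) (p : G → ℝ) (hp : ∀ x, 0 ≤ p x ∧ p x ≤ 1)
    (h1 : (univ.filter fun x => p x ≠ 0 ∧ p x ≠ 1).card ≤ 1) :
    ∃ A : Finset G, (∑ x, p x) - 1 ≤ (A.card : ℝ) ∧
      ∑ v ∈ S, ∏ i, (if v i ∈ A then (1:ℝ) else 0) ≤ ∑ v ∈ S, ∏ i, p (v i) := by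
  refine ⟨univ.filter fun x => p x = 1, ?_, ?_⟩
  · have hsplit : ∑ x ∈ univ.filter (fun x => p x = 1), p x
        + ∑ x ∈ univ.filter (fun x => ¬ p x = 1), p x = ∑ x, p x :=
      Finset.sum_filter_add_sum_filter_not _ _ _
    have e1 : ∑ x ∈ univ.filter (fun x => p x = 1), p x
        = ((univ.filter fun x => p x = 1).card : ℝ) := by
      rw [Finset.sum_congr rfl fun x hx => (mem_filter.mp hx).2, Finset.sum_const,
        nsmul_eq_mul, mul_one]
    have e2 : ∑ x ∈ univ.filter (fun x => ¬ p x = 1), p x ≤ 1 := by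
      have e3 : ∑ x ∈ (univ.filter (fun x => ¬ p x = 1)).filter (fun x => p x ≠ 0), p x
          = ∑ x ∈ univ.filter (fun x => ¬ p x = 1), p x :=
        Finset.sum_filter_of_ne fun x _ h => h
      have hsub : (univ.filter (fun x => ¬ p x = 1)).filter (fun x => p x ≠ 0)
          ⊆ univ.filter fun x => p x ≠ 0 ∧ p x ≠ 1 := by
        intro x hx
        have h' := mem_filter.mp hx
        have h'' := mem_filter.mp h'.1
        exact mem_filter.mpr ⟨mem_univ _, h'.2, h''.2⟩
      calc ∑ x ∈ univ.filter (fun x => ¬ p x = 1), p x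
          = ∑ x ∈ (univ.filter (fun x => ¬ p x = 1)).filter (fun x => p x ≠ 0), p x := e3.symm
        _ ≤ (((univ.filter (fun x => ¬ p x = 1)).filter (fun x => p x ≠ 0)).card : ℝ) * 1 := by
            rw [← nsmul_eq_mul]
            exact Finset.sum_le_card_nsmul _ _ _ fun x _ => (hp x).2
        _ ≤ 1 := by
            rw [mul_one]
            have : (((univ.filter (fun x => ¬ p x = 1)).filter (fun x => p x ≠ 0)).card : ℕ) ≤ 1 :=
              le_trans (Finset.card_le_card hsub) h1
            exact_mod_cast this
    linarith
  · refine Finset.sum_le_sum fun v _ => Finset.prod_le_prod (fun i _ => ?_) (fun i _ => ?_)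
    · split <;> norm_num
    · by_cases h : v i ∈ univ.filter fun x => p x = 1
      · simp only [h, if_true]
        exact le_of_eq (mem_filter.mp h).2.symm
      · simp only [h, if_false]
        exact (hp _).1

end Aux2

section Aux3
set_option linter.unusedSectionVars false
variable {d : ℕ}

private lemma exists_good_set (S : Finset (Fin d → G)) (hS : ∀ v ∈ S, Function.Injective v) :
    ∀ (n : ℕ) (p : G → ℝ), (∀ x, 0 ≤ p x ∧ p x ≤ 1) →
      (univ.filter fun x => p x ≠ 0 ∧ p x ≠ 1).card ≤ n →
      ∃ A : Finset G, (∑ x, p x) - 1 ≤ (A.card : ℝ) ∧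
        ∑ v ∈ S, ∏ i, (if v i ∈ A then (1:ℝ) else 0) ≤ ∑ v ∈ S, ∏ i, p (v i) := by
  intro n
  induction n with
  | zero => exact fun p hp hcard => base_case S p hp (hcard.trans (Nat.zero_le 1))
  | succ n ih =>
    intro p hp hcard
    by_cases hbase : (univ.filter fun x => p x ≠ 0 ∧ p x ≠ 1).card ≤ 1
    · exact base_case S p hp hbase
    · push_neg at hbase
      obtain ⟨a, ha, b, hb, hab⟩ := Finset.one_lt_card.mp hbase
      obtain ⟨pa0, pa1⟩ := (mem_filter.mp ha).2
      obtain ⟨pb0, pb1⟩ := (mem_filter.mp hb).2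
      have hpa : 0 < p a ∧ p a < 1 := ⟨(hp a).1.lt_of_ne (Ne.symm pa0), (hp a).2.lt_of_ne pa1⟩
      have hpb : 0 < p b ∧ p b < 1 := ⟨(hp b).1.lt_of_ne (Ne.symm pb0), (hp b).2.lt_of_ne pb1⟩
      set s := p a + p b with hs
      set ul := max 0 (s - 1) with hul
      set ur := min 1 s with hur
      have h1 : ul < p a := max_lt hpa.1 (by linarith [hpb.2])
      have h2 : p a < ur := lt_min hpa.2 (by linarith [hpb.1])
      have hq0 : Function.update (Function.update p a (p a)) b (s - p a) = p := by
        have hsb : s - p a = p b := by rw [hs]; ring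
        rw [Function.update_eq_self, hsb, Function.update_eq_self]
      have chord := chord_sum S hS p (fun x => (hp x).1) hab s h1.le h2.le
      rw [hq0] at chord
      have hkey : ∃ u, (ul ≤ u ∧ u ≤ ur) ∧ (u = ul ∨ u = ur) ∧
          ∑ v ∈ S, ∏ i, Function.update (Function.update p a u) b (s - u) (v i)
            ≤ ∑ v ∈ S, ∏ i, p (v i) := by
        set Fl := ∑ v ∈ S, ∏ i, Function.update (Function.update p a ul) b (s - ul) (v i)
        set Fr := ∑ v ∈ S, ∏ i, Function.update (Function.update p a ur) b (s - ur) (v i)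
        set F0 := ∑ v ∈ S, ∏ i, p (v i)
        rcases le_or_gt Fl F0 with h | h
        · exact ⟨ul, ⟨le_refl _, (h1.trans h2).le⟩, Or.inl rfl, h⟩
        · refine ⟨ur, ⟨(h1.trans h2).le, le_refl _⟩, Or.inr rfl, ?_⟩
          by_contra hF
          push_neg at hF
          nlinarith [mul_pos (sub_pos.mpr h2) (sub_pos.mpr h),
            mul_pos (sub_pos.mpr h1) (sub_pos.mpr hF)]
      obtain ⟨e, ⟨he1, he2⟩, heor, hFe⟩ := hkey
      set p' := Function.update (Function.update p a e) b (s - e) with hp'def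
      have hp'a : p' a = e := by
        rw [hp'def, Function.update_of_ne hab, Function.update_self]
      have hp'b : p' b = s - e := by rw [hp'def, Function.update_self]
      have hp'x : ∀ x, x ≠ a → x ≠ b → p' x = p x := by
        intro x hxa hxb
        rw [hp'def, Function.update_of_ne hxb, Function.update_of_ne hxa]
      have hp' : ∀ x, 0 ≤ p' x ∧ p' x ≤ 1 := by
        intro x
        by_cases hxb : x = b
        · subst hxb
          rw [hp'b]
          constructor
          · have : e ≤ s := he2.trans (min_le_right 1 s)
            linarith
          · have : s - 1 ≤ e := (le_max_right 0 (s - 1)).trans he1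
            linarith
        · by_cases hxa : x = a
          · subst hxa
            rw [hp'a]
            exact ⟨(le_max_left 0 (s - 1)).trans he1, he2.trans (min_le_left 1 s)⟩
          · rw [hp'x x hxa hxb]; exact hp x
      have hsum : ∑ x, p' x = ∑ x, p x := by
        rw [hp'def, Finset.sum_update_of_mem (mem_univ b),
          Finset.sum_update_of_mem (by simp [hab] : a ∈ univ \ {b})]
        have : ∑ x, p x = p b + ∑ x ∈ univ \ {b}, p x := by
          rw [Finset.sum_eq_add_sum_sdiff_singleton_of_mem (mem_univ b)]
        rw [this, Finset.sum_eq_add_sum_sdiff_singleton_of_mem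
          (by simp [hab] : a ∈ univ \ {b}) p]
        rw [hs]; ring
      have hcard' : (univ.filter fun x => p' x ≠ 0 ∧ p' x ≠ 1).card ≤ n := by
        have hint : p' a = 0 ∨ p' a = 1 ∨ p' b = 0 ∨ p' b = 1 := by
          rcases heor with rfl | rfl
          · rcases max_choice 0 (s - 1) with h | h
            · exact Or.inl (by rw [hp'a, hul, h])
            · refine Or.inr (Or.inr (Or.inr ?_))
              rw [hp'b, hul, h]; ring
          · rcases min_choice 1 s with h | h
            · exact Or.inr (Or.inl (by rw [hp'a, hur, h]))
            · refine Or.inr (Or.inr (Or.inl ?_))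
              rw [hp'b, hur, h]; ring
        have hsubset : (univ.filter fun x => p' x ≠ 0 ∧ p' x ≠ 1)
            ⊆ univ.filter fun x => p x ≠ 0 ∧ p x ≠ 1 := by
          intro x hx
          obtain ⟨-, hx1, hx2⟩ := mem_filter.mp hx
          by_cases hxa : x = a
          · subst hxa; exact ha
          · by_cases hxb : x = b
            · subst hxb; exact hb
            · rw [hp'x x hxa hxb] at hx1 hx2
              exact mem_filter.mpr ⟨mem_univ _, hx1, hx2⟩
        have hstrict : (univ.filter fun x => p' x ≠ 0 ∧ p' x ≠ 1)
            ⊂ univ.filter fun x => p x ≠ 0 ∧ p x ≠ 1 := by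
          refine Finset.ssubset_iff_of_subset hsubset |>.mpr ?_
          rcases hint with h | h | h | h
          · exact ⟨a, ha, fun hmem => (mem_filter.mp hmem).2.1 h⟩
          · exact ⟨a, ha, fun hmem => (mem_filter.mp hmem).2.2 h⟩
          · exact ⟨b, hb, fun hmem => (mem_filter.mp hmem).2.1 h⟩
          · exact ⟨b, hb, fun hmem => (mem_filter.mp hmem).2.2 h⟩
        have := Finset.card_lt_card hstrict
        omega
      obtain ⟨A, hA1, hA2⟩ := ih p' hp' hcard'
      rw [hsum] at hA1
      exact ⟨A, hA1, hA2.trans hFe⟩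

end Aux3

/-- The configuration `C(L)` given by a matrix `L ∈ ℤ^{k×d}`: the kernel in `G^d` of the induced
map `G^d → G^k`, `v ↦ (∑ i, L h i • v i)_h`. -/
def config {k d : ℕ} (L : Matrix (Fin k) (Fin d) ℤ) : Finset (Fin d → G) :=
  Finset.univ.filter fun v => ∀ h, ∑ i, L h i • v i = 0

/-- The set `C^#(L)` of non-injective instances of the configuration. -/
def nonInj {k d : ℕ} (L : Matrix (Fin k) (Fin d) ℤ) : Finset (Fin d → G) :=
  (config (G := G) L).filter fun v => ∃ i j, i ≠ j ∧ v i = v j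

/-- The arithmetic multiplicity `t_L(f)`. -/
noncomputable def tL {k d : ℕ} (L : Matrix (Fin k) (Fin d) ℤ) (f : G → ℝ) : ℝ :=
  (∑ v ∈ config L, ∏ i, f (v i)) / ((config (G := G) L).card : ℝ)

/-- The average `E(f)` of `f` over `G`. -/
noncomputable def avg (f : G → ℝ) : ℝ := (∑ x, f x) / (Fintype.card G : ℝ)

/-- Conversion of maps to sets, part (i): for any `f : G → [0,1]` there is a set `A ⊆ G` with
`|A| ≥ E(f)·|G| − 1` and `t_L(A) ≤ t_L(f) + |C^#(L) ∩ A^d| / |C(L)|`. -/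
theorem maps_to_sets_sidorenko {k d : ℕ} (L : Matrix (Fin k) (Fin d) ℤ)
    (f : G → ℝ) (hf : ∀ x, f x ∈ Set.Icc (0 : ℝ) 1) :
    ∃ A : Finset G,
      (A.card : ℝ) ≥ avg f * (Fintype.card G : ℝ) - 1 ∧
      tL L (fun x => if x ∈ A then (1 : ℝ) else 0) ≤
        tL L f +
          (((nonInj (G := G) L).filter fun v => ∀ i, v i ∈ A).card : ℝ) /
            ((config (G := G) L).card : ℝ) := by
  have hinj : ∀ v ∈ (config (G := G) L).filter (fun v => ¬ ∃ i j, i ≠ j ∧ v i = v j),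
      Function.Injective v := by
    intro v hv i j hij
    by_contra hne
    exact (mem_filter.mp hv).2 ⟨i, j, hne, hij⟩
  have hp : ∀ x, 0 ≤ f x ∧ f x ≤ 1 := fun x => ⟨(hf x).1, (hf x).2⟩
  obtain ⟨A, hA1, hA2⟩ := exists_good_set _ hinj (Fintype.card G) f hp
    (le_trans (Finset.card_filter_le _ _) (by simp))
  refine ⟨A, ?_, ?_⟩
  · have hG : (0:ℝ) < Fintype.card G := by
      exact_mod_cast Fintype.card_pos
    have havg : avg f * Fintype.card G = ∑ x, f x := by
      rw [avg]; field_simp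
    rw [ge_iff_le, havg]
    exact hA1
  · have hsplit := Finset.sum_filter_add_sum_filter_not (config (G := G) L)
      (fun v => ∃ i j, i ≠ j ∧ v i = v j) (fun v => ∏ i, (if v i ∈ A then (1:ℝ) else 0))
    have e1 : ∑ v ∈ (config (G := G) L).filter (fun v => ∃ i j, i ≠ j ∧ v i = v j),
        ∏ i, (if v i ∈ A then (1:ℝ) else 0)
        = (((nonInj (G := G) L).filter fun v => ∀ i, v i ∈ A).card : ℝ) := by
      calc ∑ v ∈ (config (G := G) L).filter (fun v => ∃ i j, i ≠ j ∧ v i = v j),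
            ∏ i, (if v i ∈ A then (1:ℝ) else 0)
          = ∑ v ∈ nonInj (G := G) L, (if ∀ i, v i ∈ A then (1:ℝ) else 0) := by
            refine Finset.sum_congr rfl fun v _ => ?_
            rw [Finset.prod_boole]
            simp
        _ = _ := by rw [Finset.sum_boole]
    have e2 : ∑ v ∈ (config (G := G) L).filter (fun v => ¬ ∃ i j, i ≠ j ∧ v i = v j),
        ∏ i, f (v i) ≤ ∑ v ∈ config (G := G) L, ∏ i, f (v i) :=
      Finset.sum_le_sum_of_subset_of_nonneg (Finset.filter_subset _ _)
        (fun v _ _ => Finset.prod_nonneg fun i _ => (hf (v i)).1)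
    have hnum : ∑ v ∈ config (G := G) L, ∏ i, (if v i ∈ A then (1:ℝ) else 0)
        ≤ (∑ v ∈ config (G := G) L, ∏ i, f (v i))
          + (((nonInj (G := G) L).filter fun v => ∀ i, v i ∈ A).card : ℝ) := by
      linarith [hA2, e2, hsplit, e1]
    rcases Nat.eq_zero_or_pos (config (G := G) L).card with hc | hc
    · have hconfig : config (G := G) L = ∅ := Finset.card_eq_zero.mp hc
      have hni : nonInj (G := G) L = ∅ := by rw [nonInj, hconfig]; rfl
      simp [tL, hconfig, hni]
    · have hc' : (0:ℝ) < ((config (G := G) L).card : ℝ) := by exact_mod_cast hc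
      rw [tL, tL, ← add_div]
      exact div_le_div_of_nonneg_right hnum hc'.le
end

section
/- Let G be a finite abelian group, L ∈ ℤ^{k×d} a matrix, and f : G → [0,1]. Then there exists a set A ⊆ G such that t_L(A) + t_L(G∖A) ≤ t_L(f) + t_L(1−f) + (|C^#(L) ∩ A^d| + |C^#(L) ∩ (G∖A)^d|) / |C(L)|. -/
open Finset

variable {G : Type*} [AddCommGroup G] [Fintype G] [DecidableEq G]

lemma key_sum (g h : G → ℝ) (S : Finset G) :
    ∑ A ∈ Finset.univ.filter (fun A : Finset G => S ⊆ A),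
      (∏ x ∈ A, g x) * ∏ x ∈ Aᶜ, h x
      = (∏ x ∈ S, g x) * ∏ x ∈ Sᶜ, (g x + h x) := by
  rw [Finset.prod_add, Finset.mul_sum]
  refine Finset.sum_nbij' (fun A => A \ S) (fun B => B ∪ S) ?_ ?_ ?_ ?_ ?_
  · intro A hA
    simp only [mem_filter, mem_univ, true_and] at hA
    simp only [mem_powerset]
    intro x hx
    simp only [mem_sdiff] at hx
    simp [mem_compl, hx.2]
  · intro B hB
    simp only [mem_filter, mem_univ, true_and]
    exact subset_union_right
  · intro A hA
    simp only [mem_filter, mem_univ, true_and] at hA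
    exact sdiff_union_of_subset hA
  · intro B hB
    simp only [mem_powerset] at hB
    apply union_sdiff_cancel_right
    rw [disjoint_iff_inter_eq_empty, eq_empty_iff_forall_notMem]
    intro x hx
    simp only [mem_inter] at hx
    exact (mem_compl.mp (hB hx.1)) hx.2
  · intro A hA
    simp only [mem_filter, mem_univ, true_and] at hA
    have h1 : (∏ x ∈ A \ S, g x) * ∏ x ∈ S, g x = ∏ x ∈ A, g x := prod_sdiff hA
    have h2 : Sᶜ \ (A \ S) = Aᶜ := by
      ext x
      simp only [mem_sdiff, mem_compl]
      constructor
      · rintro ⟨hxS, hx⟩; intro hxA; exact hx ⟨hxA, hxS⟩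
      · intro hxA; exact ⟨fun hxS => hxA (hA hxS), fun hc => hxA hc.1⟩
    rw [h2, ← h1]; ring

lemma exp_ind (g h : G → ℝ) (S : Finset G) :
    ∑ A : Finset G, ((∏ x ∈ A, g x) * ∏ x ∈ Aᶜ, h x) * (if S ⊆ A then (1:ℝ) else 0)
      = (∏ x ∈ S, g x) * ∏ x ∈ Sᶜ, (g x + h x) := by
  simp only [mul_ite, mul_one, mul_zero, ← Finset.sum_filter]
  exact key_sum g h S

/-- Conversion of maps to sets, part (ii): for any `f : G → [0,1]` there is a set `A ⊆ G` with
`t_L(A) + t_L(Aᶜ) ≤ t_L(f) + t_L(1−f) + (|C^#(L) ∩ A^d| + |C^#(L) ∩ (Aᶜ)^d|) / |C(L)|`. -/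
theorem maps_to_sets_common {k d : ℕ} (L : Matrix (Fin k) (Fin d) ℤ)
    (f : G → ℝ) (hf : ∀ x, f x ∈ Set.Icc (0 : ℝ) 1) :
    ∃ A : Finset G,
      tL L (fun x => if x ∈ A then (1 : ℝ) else 0) +
          tL L (fun x => if x ∈ Aᶜ then (1 : ℝ) else 0) ≤
        tL L f + tL L (fun x => 1 - f x) +
          ((((nonInj (G := G) L).filter fun v => ∀ i, v i ∈ A).card : ℝ) +
              (((nonInj (G := G) L).filter fun v => ∀ i, v i ∈ Aᶜ).card : ℝ)) /
            ((config (G := G) L).card : ℝ) := by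
  classical
  set cfg := config (G := G) L with hcfg
  have h0 : (0 : Fin d → G) ∈ cfg := by
    simp [hcfg, config]
  have hNpos : (0:ℝ) < (cfg.card : ℝ) := by
    exact_mod_cast Finset.card_pos.mpr ⟨0, h0⟩
  set p : (Fin d → G) → Prop := fun v => ∃ i j, i ≠ j ∧ v i = v j with hp
  set inj : Finset (Fin d → G) := cfg.filter (fun v => ¬ p v) with hinj
  set w : Finset G → ℝ := fun A => (∏ x ∈ A, f x) * ∏ x ∈ Aᶜ, (1 - f x) with hw
  have hf0 : ∀ x, 0 ≤ f x := fun x => (hf x).1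
  have hf1 : ∀ x, 0 ≤ 1 - f x := fun x => by linarith [(hf x).2]
  have hw0 : ∀ A, 0 ≤ w A := fun A =>
    mul_nonneg (prod_nonneg fun x _ => hf0 x) (prod_nonneg fun x _ => hf1 x)
  have hw1 : ∑ A : Finset G, w A = 1 := by
    have := Finset.prod_add f (fun x => 1 - f x) (univ : Finset G)
    simp only [add_sub_cancel, prod_const_one, powerset_univ] at this
    rw [this]
    apply Finset.sum_congr rfl
    intro A _
    simp only [hw, compl_eq_univ_sdiff]
  -- expectation of indicator of S ⊆ A
  have hE1 : ∀ S : Finset G,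
      ∑ A : Finset G, w A * (if S ⊆ A then (1:ℝ) else 0) = ∏ x ∈ S, f x := by
    intro S
    have := exp_ind f (fun x => 1 - f x) S
    simpa using this
  have hE2 : ∀ S : Finset G,
      ∑ A : Finset G, w A * (if S ⊆ Aᶜ then (1:ℝ) else 0) = ∏ x ∈ S, (1 - f x) := by
    intro S
    have hb : Function.Bijective (fun A : Finset G => Aᶜ) :=
      Function.Involutive.bijective (fun A => compl_compl A)
    have hstep : ∑ A : Finset G,
        ((∏ x ∈ A, (1 - f x)) * ∏ x ∈ Aᶜ, f x) * (if S ⊆ A then (1:ℝ) else 0)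
        = ∑ A : Finset G, w A * (if S ⊆ Aᶜ then (1:ℝ) else 0) := by
      refine Fintype.sum_bijective (fun A : Finset G => Aᶜ) hb _ _ ?_
      intro A
      simp only [hw, compl_compl]
      ring
    rw [← hstep, exp_ind]
    simp
  -- pointwise expectation over injective instances
  have hexp : ∀ v ∈ inj,
      ∑ A : Finset G, w A * ((if ∀ i, v i ∈ A then (1:ℝ) else 0)
        + if ∀ i, v i ∈ Aᶜ then (1:ℝ) else 0)
      = (∏ i, f (v i)) + ∏ i, (1 - f (v i)) := by
    intro v hv
    have hvinj : ∀ x ∈ (univ : Finset (Fin d)), ∀ y ∈ univ, v x = v y → x = y := by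
      intro x _ y _ hxy
      by_contra hne
      rw [hinj, mem_filter] at hv
      exact hv.2 ⟨x, y, hne, hxy⟩
    have himg : ∀ A : Finset G, (∀ i, v i ∈ A) ↔ (univ.image v ⊆ A) := by
      intro A
      simp [Finset.image_subset_iff]
    have e1 : ∀ A : Finset G, (if ∀ i, v i ∈ A then (1:ℝ) else 0)
        = (if univ.image v ⊆ A then (1:ℝ) else 0) := by
      intro A; exact if_congr (himg A) rfl rfl
    simp only [mul_add, Finset.sum_add_distrib, e1]
    rw [hE1, hE2, Finset.prod_image hvinj, Finset.prod_image hvinj]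
  set Φ : Finset G → ℝ := fun A => ∑ v ∈ inj,
    ((if ∀ i, v i ∈ A then (1:ℝ) else 0) + if ∀ i, v i ∈ Aᶜ then (1:ℝ) else 0) with hΦ
  set T : ℝ := ∑ v ∈ inj, ((∏ i, f (v i)) + ∏ i, (1 - f (v i))) with hT
  have hswap : ∑ A : Finset G, w A * Φ A = T := by
    simp only [hΦ, Finset.mul_sum]
    rw [Finset.sum_comm]
    exact Finset.sum_congr rfl hexp
  have hex : ∃ A : Finset G, Φ A ≤ T := by
    by_contra hcon
    push_neg at hcon
    have hA0 : ∃ A : Finset G, 0 < w A := by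
      by_contra hcon2
      push_neg at hcon2
      have : ∑ A : Finset G, w A ≤ 0 := Finset.sum_nonpos fun A _ => hcon2 A
      linarith [hw1]
    obtain ⟨A0, hA0⟩ := hA0
    have hlt : ∑ A : Finset G, w A * T < ∑ A : Finset G, w A * Φ A := by
      refine Finset.sum_lt_sum (fun A _ => ?_) ⟨A0, mem_univ _, ?_⟩
      · exact mul_le_mul_of_nonneg_left (hcon A).le (hw0 A)
      · exact mul_lt_mul_of_pos_left (hcon A0) hA0
    rw [hswap, ← Finset.sum_mul, hw1, one_mul] at hlt
    exact lt_irrefl T hlt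
  obtain ⟨A, hA⟩ := hex
  refine ⟨A, ?_⟩
  -- rewrite tL indicators and card filters as sums of ites over cfg / nonInj
  have hind : ∀ B : Finset G, tL L (fun x => if x ∈ B then (1:ℝ) else 0)
      = (∑ v ∈ cfg, if ∀ i, v i ∈ B then (1:ℝ) else 0) / (cfg.card : ℝ) := by
    intro B
    rw [tL]
    congr 1
    refine Finset.sum_congr rfl fun v _ => ?_
    rw [Finset.prod_boole]
    simp
  have hcard : ∀ B : Finset G,
      (((nonInj (G := G) L).filter fun v => ∀ i, v i ∈ B).card : ℝ)
      = ∑ v ∈ cfg.filter p, (if ∀ i, v i ∈ B then (1:ℝ) else 0) := by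
    intro B
    rw [Finset.sum_boole]
    congr 1
  rw [hind A, hind Aᶜ, hcard A, hcard Aᶜ]
  have htf : tL L f = (∑ v ∈ cfg, ∏ i, f (v i)) / (cfg.card : ℝ) := rfl
  have htg : tL L (fun x => 1 - f x) = (∑ v ∈ cfg, ∏ i, (1 - f (v i))) / (cfg.card : ℝ) := rfl
  rw [htf, htg, ← add_div, ← add_div, ← add_div]
  rw [div_le_div_iff₀ hNpos hNpos]
  have hkey : ∀ B : Finset G,
      ∑ v ∈ cfg, (if ∀ i, v i ∈ B then (1:ℝ) else 0)
      = (∑ v ∈ cfg.filter p, if ∀ i, v i ∈ B then (1:ℝ) else 0)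
        + ∑ v ∈ inj, (if ∀ i, v i ∈ B then (1:ℝ) else 0) := by
    intro B
    rw [hinj, ← Finset.sum_filter_add_sum_filter_not cfg p]
  have hTle : T ≤ (∑ v ∈ cfg, ∏ i, f (v i)) + ∑ v ∈ cfg, ∏ i, (1 - f (v i)) := by
    rw [hT, ← Finset.sum_add_distrib]
    refine Finset.sum_le_sum_of_subset_of_nonneg (Finset.filter_subset _ _) ?_
    intro v _ _
    have : (0:ℝ) ≤ ∏ i, f (v i) := prod_nonneg fun i _ => hf0 (v i)
    have : (0:ℝ) ≤ ∏ i, (1 - f (v i)) := prod_nonneg fun i _ => hf1 (v i)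
    positivity
  have hΦA : Φ A = (∑ v ∈ inj, if ∀ i, v i ∈ A then (1:ℝ) else 0)
      + ∑ v ∈ inj, (if ∀ i, v i ∈ Aᶜ then (1:ℝ) else 0) := by
    simp only [hΦ, Finset.sum_add_distrib]
  have := hkey A
  have := hkey Aᶜ
  nlinarith [hA, hTle, hkey A, hkey Aᶜ, hΦA, hNpos]
end

section
/- Let G be a finite abelian group, k ≤ d, and let L ∈ ℤ^{k×d} have full rank in G, i.e. the induced map G^d → G^k is surjective. If L admits a canceling partition in G, then L is fully Sidorenko in G; that is, for every f : G → [0,1] one has t_L(f) ≥ (E(f))^d. -/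
open Finset

variable {G : Type*} [AddCommGroup G] [Fintype G] [DecidableEq G]

/-- `L ∈ ℤ^{k×d}` admits a canceling partition in `G`: a partition of the index set into
(distinct) pairs, encoded by a fixed-point-free involution `σ`, such that for each pair
`{i, σ i}` and each row `h`, the pair of coefficients `(L h i, L h (σ i))` is canceling in `G`,
i.e. their sum acts trivially on `G`. -/
def HasCancelingPartition (G : Type*) [AddCommGroup G] {k d : ℕ}
    (L : Matrix (Fin k) (Fin d) ℤ) : Prop :=
  ∃ σ : Equiv.Perm (Fin d), (∀ i, σ i ≠ i) ∧ (∀ i, σ (σ i) = i) ∧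
    ∀ i, ∀ h, ∀ x : G, (L h i + L h (σ i)) • x = 0

section CancelAux

variable {d : ℕ}

/-- The set of smaller elements of each pair of a fixed-point-free involution. -/
def halfSet (σ : Equiv.Perm (Fin d)) : Finset (Fin d) :=
  Finset.univ.filter fun i => i < σ i

lemma mem_halfSet {σ : Equiv.Perm (Fin d)} {i : Fin d} : i ∈ halfSet σ ↔ i < σ i := by
  simp [halfSet]

lemma not_mem_halfSet {σ : Equiv.Perm (Fin d)} (hne : ∀ i, σ i ≠ i) {i : Fin d} :
    i ∉ halfSet σ ↔ σ i < i := by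
  rw [mem_halfSet, not_lt]
  constructor
  · intro h; exact lt_of_le_of_ne h (hne i)
  · exact le_of_lt

lemma compl_halfSet {σ : Equiv.Perm (Fin d)} (hne : ∀ i, σ i ≠ i) (hinv : ∀ i, σ (σ i) = i) :
    (halfSet σ)ᶜ = (halfSet σ).image σ := by
  ext j
  simp only [Finset.mem_compl, Finset.mem_image]
  constructor
  · intro hj
    refine ⟨σ j, ?_, hinv j⟩
    rw [mem_halfSet, hinv]
    exact (not_mem_halfSet hne).1 hj
  · rintro ⟨i, hi, rfl⟩
    rw [not_mem_halfSet hne, hinv]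
    exact mem_halfSet.1 hi

/-- Splitting `G^d` into pairs of functions on the half set. -/
def pairEquiv {G : Type*} (σ : Equiv.Perm (Fin d)) (hne : ∀ i, σ i ≠ i)
    (hinv : ∀ i, σ (σ i) = i) :
    (Fin d → G) ≃ ({i // i ∈ halfSet σ} → G) × ({i // i ∈ halfSet σ} → G) where
  toFun v := (fun i => v i, fun i => v (σ i))
  invFun p j :=
    if h : j ∈ halfSet σ then p.1 ⟨j, h⟩
    else p.2 ⟨σ j, mem_halfSet.2 (by rw [hinv]; exact (not_mem_halfSet hne).1 h)⟩
  left_inv v := by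
    funext j
    by_cases h : j ∈ halfSet σ
    · simp [h]
    · simp [h, hinv]
  right_inv p := by
    obtain ⟨a, b⟩ := p
    have hnot : ∀ i : {i // i ∈ halfSet σ}, σ i.1 ∉ halfSet σ := by
      intro i
      rw [not_mem_halfSet hne, hinv]
      exact mem_halfSet.1 i.2
    refine Prod.ext ?_ ?_ <;> funext i
    · simp
    · simp only [dif_neg (hnot i)]
      congr 1
      exact Subtype.ext (hinv i.1)

end CancelAux

/-- If `k ≤ d`, `L ∈ ℤ^{k×d}` has full rank in `G` (the induced map `G^d → G^k` is surjective)
and `L` admits a canceling partition in `G`, then `L` is fully Sidorenko in `G`. -/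
theorem canceling_partition_fully_sidorenko {k d : ℕ} (hk : k ≤ d)
    (L : Matrix (Fin k) (Fin d) ℤ)
    (hrank : Function.Surjective (fun (v : Fin d → G) (h : Fin k) => ∑ i, L h i • v i))
    (hpart : HasCancelingPartition G L)
    (f : G → ℝ) (hf : ∀ x, f x ∈ Set.Icc (0 : ℝ) 1) :
    tL L f ≥ (avg f) ^ d := by
  classical
  obtain ⟨σ, hne, hinv, hcan⟩ := hpart
  set S : Finset (Fin d) := halfSet σ with hSdef
  -- the coefficient cancellation, pointwise
  have hLs : ∀ (i : Fin d) (h : Fin k) (x : G), L h (σ i) • x = -(L h i • x) := by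
    intro i h x
    have h0 := hcan i h x
    rw [add_smul] at h0
    exact eq_neg_of_add_eq_zero_right h0
  set φ : (Fin d → G) → (Fin k → G) := fun v h => ∑ i, L h i • v i with hφdef
  set ψ : ({i // i ∈ S} → G) → (Fin k → G) := fun a h => ∑ i, L h i.1 • a i with hψdef
  set M : (Fin k → G) → ℝ :=
    fun w => ∑ a : {i // i ∈ S} → G, if ψ a = w then ∏ i, f (a i) else 0 with hMdef
  set F : (Fin k → G) → ℝ :=
    fun y => ∑ v : Fin d → G, if φ v = y then ∏ i, f (v i) else 0 with hFdef
  set e := pairEquiv (G := G) σ hne hinv with hedef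
  -- splitting the product
  have hprod : ∀ v : Fin d → G,
      ∏ i, f (v i) = (∏ i : {i // i ∈ S}, f (v i)) * ∏ i : {i // i ∈ S}, f (v (σ i)) := by
    intro v
    rw [← Finset.prod_mul_prod_compl S (fun i => f (v i)),
      compl_halfSet hne hinv, Finset.prod_image (fun a _ b _ h => σ.injective h),
      Finset.prod_subtype S (fun _ => Iff.rfl) (fun i => f (v i)),
      Finset.prod_subtype S (fun _ => Iff.rfl) (fun i => f (v (σ i)))]
  -- splitting the linear map
  have hphi : ∀ v : Fin d → G,
      φ v = ψ (fun i => v i) - ψ (fun i => v (σ i)) := by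
    intro v
    funext h
    have : ∑ i, L h i • v i =
        (∑ i ∈ S, L h i • v i) + ∑ i ∈ Sᶜ, L h i • v i :=
      (Finset.sum_add_sum_compl S _).symm
    simp only [hφdef, hψdef, Pi.sub_apply]
    rw [this, compl_halfSet hne hinv, Finset.sum_image (fun a _ b _ h => σ.injective h)]
    have : ∑ i ∈ S, L h (σ i) • v (σ i) = -∑ i ∈ S, L h i • v (σ i) := by
      rw [← Finset.sum_neg_distrib]
      exact Finset.sum_congr rfl fun i _ => hLs i h (v (σ i))
    rw [this,
      Finset.sum_subtype S (fun _ => Iff.rfl) (fun i => L h i • v i),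
      Finset.sum_subtype S (fun _ => Iff.rfl) (fun i => L h i • v (σ i))]
    exact (sub_eq_add_neg _ _).symm
  -- the key convolution identity
  have hkey : ∀ y, F y = ∑ w : Fin k → G, M w * M (w - y) := by
    intro y
    have hRHS : ∀ w, M w * M (w - y)
        = ∑ a : {i // i ∈ S} → G,
            if ψ a = w then (∏ i, f (a i)) * M (w - y) else 0 := by
      intro w
      rw [hMdef]
      rw [Finset.sum_mul]
      exact Finset.sum_congr rfl fun a _ => by rw [ite_mul, zero_mul]
    calc F y = ∑ p : ({i // i ∈ S} → G) × ({i // i ∈ S} → G),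
        if φ (e.symm p) = y then ∏ i, f (e.symm p i) else 0 := by
          rw [hFdef]
          exact (Equiv.sum_comp e.symm _).symm
      _ = ∑ a : {i // i ∈ S} → G, ∑ b : {i // i ∈ S} → G,
          if ψ b = ψ a - y then (∏ i, f (a i)) * ∏ i, f (b i) else 0 := by
          rw [Fintype.sum_prod_type]
          refine Finset.sum_congr rfl fun a _ => Finset.sum_congr rfl fun b _ => ?_
          have hv : e (e.symm (a, b)) = (a, b) := e.apply_symm_apply _
          have ha : (fun i : {i // i ∈ S} => e.symm (a, b) i) = a := congrArg Prod.fst hv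
          have hb : (fun i : {i // i ∈ S} => e.symm (a, b) (σ i)) = b := congrArg Prod.snd hv
          have ha' : ∀ i : {i // i ∈ S}, e.symm (a, b) i.1 = a i := fun i => congrFun ha i
          have hb' : ∀ i : {i // i ∈ S}, e.symm (a, b) (σ i.1) = b i := fun i => congrFun hb i
          rw [hprod (e.symm (a, b)), hphi (e.symm (a, b)), ha, hb]
          simp only [ha', hb']
          congr 1
          exact propext ⟨fun h => by rw [← h, sub_sub_cancel],
            fun h => by rw [h, sub_sub_cancel]⟩
      _ = ∑ a : {i // i ∈ S} → G, (∏ i, f (a i)) * M (ψ a - y) := by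
          refine Finset.sum_congr rfl fun a _ => ?_
          rw [hMdef, Finset.mul_sum]
          exact Finset.sum_congr rfl fun b _ => by rw [mul_ite, mul_zero]
      _ = ∑ a : {i // i ∈ S} → G,
          ∑ w : Fin k → G, if ψ a = w then (∏ i, f (a i)) * M (w - y) else 0 := by
          refine Finset.sum_congr rfl fun a _ => ?_
          rw [Finset.sum_ite_eq Finset.univ (ψ a)
            (fun w => (∏ i, f (a i)) * M (w - y)), if_pos (Finset.mem_univ _)]
      _ = ∑ w : Fin k → G, M w * M (w - y) := by
          rw [Finset.sum_comm]
          exact Finset.sum_congr rfl fun w _ => (hRHS w).symm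
  -- F 0 is a sum of squares
  have hF0 : F 0 = ∑ w : Fin k → G, M w ^ 2 := by
    rw [hkey 0]
    exact Finset.sum_congr rfl fun w _ => by rw [sub_zero, sq]
  -- total mass of M
  have hS2 : 2 * S.card = d := by
    have h1 : S.card + Sᶜ.card = d := by
      rw [Finset.card_add_card_compl]
      simp
    have h2 : Sᶜ.card = S.card := by
      rw [compl_halfSet hne hinv, Finset.card_image_of_injective _ σ.injective]
    omega
  have hMsum : ∑ w : Fin k → G, M w = (∑ x, f x) ^ S.card := by
    have : ∑ w : Fin k → G, M w = ∑ a : {i // i ∈ S} → G, ∏ i, f (a i) := by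
      rw [hMdef, Finset.sum_comm]
      refine Finset.sum_congr rfl fun a _ => ?_
      rw [Finset.sum_ite_eq Finset.univ (ψ a) (fun _ => ∏ i, f (a i)),
        if_pos (Finset.mem_univ _)]
    rw [this]
    have := Finset.prod_univ_sum (fun _ : {i // i ∈ S} => (Finset.univ : Finset G))
      (fun _ x => f x)
    rw [Fintype.piFinset_univ] at this
    rw [← this, Finset.prod_const]
    congr 1
    · simp
  -- the Cauchy–Schwarz step
  set q : ℝ := (Fintype.card G : ℝ) with hq
  have hqpos : 0 < q := by
    rw [hq]; exact_mod_cast Fintype.card_pos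
  have hCS : (∑ x, f x) ^ d ≤ q ^ k * F 0 := by
    have h1 : (∑ w : Fin k → G, M w) ^ 2 ≤
        (Finset.univ : Finset (Fin k → G)).card * ∑ w : Fin k → G, M w ^ 2 :=
      sq_sum_le_card_mul_sum_sq
    rw [hMsum, hF0] at *
    have hcard : ((Finset.univ : Finset (Fin k → G)).card : ℝ) = q ^ k := by
      rw [Finset.card_univ, Fintype.card_fun, Fintype.card_fin, hq]
      push_cast
      ring
    calc (∑ x, f x) ^ d = ((∑ x, f x) ^ S.card) ^ 2 := by
          rw [← pow_mul, mul_comm S.card 2, hS2]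
      _ ≤ q ^ k * ∑ w : Fin k → G, M w ^ 2 := by
          rw [← hcard]; exact_mod_cast h1
  -- the configuration as a fiber of φ
  have hconfig : config (G := G) L = Finset.univ.filter fun v => φ v = 0 := by
    ext v
    simp [config, hφdef, funext_iff]
  have hFconfig : ∑ v ∈ config (G := G) L, ∏ i, f (v i) = F 0 := by
    rw [hconfig, hFdef, Finset.sum_filter]
  -- all fibers of φ have the same size
  have hφadd : ∀ u v : Fin d → G, φ (u + v) = φ u + φ v := by
    intro u v
    funext h
    simp [hφdef, smul_add, Finset.sum_add_distrib]
  have hφsub : ∀ u v : Fin d → G, φ (u - v) = φ u - φ v := by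
    intro u v
    funext h
    simp [hφdef, smul_sub, Finset.sum_sub_distrib]
  have hfib : ∀ y : Fin k → G,
      (Finset.univ.filter fun v : Fin d → G => φ v = y).card = (config (G := G) L).card := by
    intro y
    obtain ⟨v₀, hv₀⟩ := hrank y
    have hv₀' : φ v₀ = y := hv₀
    rw [hconfig]
    refine (Finset.card_nbij' (fun v => v - v₀) (fun v => v + v₀) ?_ ?_ ?_ ?_).symm.symm
    · intro v hv
      simp only [Finset.mem_coe, Finset.mem_filter, Finset.mem_univ, true_and] at hv ⊢
      rw [hφsub, hv, hv₀']
      simp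
    · intro v hv
      simp only [Finset.mem_coe, Finset.mem_filter, Finset.mem_univ, true_and] at hv ⊢
      rw [hφadd, hv, hv₀']
      simp
    · intro v _; simp
    · intro v _; simp
  have hcardconfig : (Fintype.card G : ℕ) ^ d = (Fintype.card G) ^ k * (config (G := G) L).card := by
    have h1 : (Finset.univ : Finset (Fin d → G)).card =
        ∑ y : Fin k → G, (Finset.univ.filter fun v : Fin d → G => φ v = y).card :=
      Finset.card_eq_sum_card_fiberwise (fun v _ => Finset.mem_univ (φ v))
    rw [Finset.card_univ, Fintype.card_fun, Fintype.card_fin] at h1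
    rw [h1]
    rw [Finset.sum_congr rfl fun y _ => hfib y, Finset.sum_const, Finset.card_univ,
      Fintype.card_fun, Fintype.card_fin, smul_eq_mul]
  have hNpos : 0 < ((config (G := G) L).card : ℝ) := by
    have : (0 : Fin d → G) ∈ config (G := G) L := by
      simp [config]
    exact_mod_cast Finset.card_pos.2 ⟨0, this⟩
  -- final computation
  rw [tL, hFconfig, avg, div_pow, ← hq]
  rw [ge_iff_le, div_le_div_iff₀ (by positivity) hNpos]
  have hqd : q ^ d = q ^ k * ((config (G := G) L).card : ℝ) := by
    rw [hq]
    exact_mod_cast hcardconfig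
  calc (∑ x, f x) ^ d * ((config (G := G) L).card : ℝ)
      ≤ (q ^ k * F 0) * ((config (G := G) L).card : ℝ) :=
        mul_le_mul_of_nonneg_right hCS (le_of_lt hNpos)
    _ = F 0 * (q ^ k * ((config (G := G) L).card : ℝ)) := by ring
    _ = F 0 * q ^ d := by rw [hqd]
end

section
/- Let G be a finite abelian group, L ∈ ℤ^{k×d} a matrix, and f : G → [0,1]. Then there exists a function g : G → [0,1] with E(g) = E(f), such that the set {x ∈ G : g(x) ∉ {0,1}} has at most one element, and Σ_{v∈C^inj(L)} Π_{i=1}^d g(v_i) ≤ Σ_{v∈C^inj(L)} Π_{i=1}^d f(v_i). -/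
set_option linter.unusedSectionVars false
set_option maxHeartbeats 1000000


open Finset

variable {G : Type*} [AddCommGroup G] [Fintype G] [DecidableEq G]

private def upd (f : G → ℝ) (x y : G) (t : ℝ) : G → ℝ :=
  fun z => if z = x then f x + t else if z = y then f y - t else f z

private lemma upd_zero (f : G → ℝ) (x y : G) : upd f x y 0 = f := by
  funext z
  unfold upd
  split_ifs with h1 h2 <;> simp_all

private lemma quad_sum {ι : Type*} [DecidableEq ι] (T : Finset ι) (F : ι → ℝ → ℝ)
    (h : ∀ v ∈ T, ∃ b c : ℝ, c ≤ 0 ∧ ∀ t, F v t = F v 0 + b * t + c * t ^ 2) :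
    ∃ B C : ℝ, C ≤ 0 ∧ ∀ t, ∑ v ∈ T, F v t = (∑ v ∈ T, F v 0) + B * t + C * t ^ 2 := by
  induction T using Finset.induction with
  | empty => exact ⟨0, 0, le_rfl, by simp⟩
  | @insert a s ha ih =>
    obtain ⟨b, c, hc, hbc⟩ := h a (mem_insert_self a s)
    obtain ⟨B, C, hC, hBC⟩ := ih fun v hv => h v (mem_insert_of_mem hv)
    exact ⟨b + B, c + C, by linarith, fun t => by
      rw [sum_insert ha, sum_insert ha, hbc t, hBC t]; ring⟩

private lemma endpoint_min (Sf : ℝ → ℝ) (B C a b : ℝ) (hC : C ≤ 0) (ha : a ≤ 0) (hb : 0 ≤ b)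
    (hS : ∀ t, Sf t = Sf 0 + B * t + C * t ^ 2) : Sf a ≤ Sf 0 ∨ Sf b ≤ Sf 0 := by
  rcases le_or_gt 0 B with h | h
  · left; rw [hS a]; nlinarith
  · right; rw [hS b]; nlinarith

private lemma prod_upd {d : ℕ} (f : G → ℝ) (hf : ∀ z, 0 ≤ f z) (x y : G) (hxy : x ≠ y)
    (v : Fin d → G) (hv : Function.Injective v) :
    ∃ b c : ℝ, c ≤ 0 ∧ ∀ t, ∏ i, upd f x y t (v i) =
      (∏ i, f (v i)) + b * t + c * t ^ 2 := by
  classical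
  set m := (univ.filter fun i => v i = x).card with hm
  set n := (univ.filter fun i => v i = y).card with hn
  set P := ∏ i ∈ univ.filter fun i => ¬v i = x ∧ ¬v i = y, f (v i) with hP
  have hPnn : 0 ≤ P := Finset.prod_nonneg fun i _ => hf _
  have e1 : ((univ.filter fun i => ¬v i = x).filter fun i => v i = y) =
      univ.filter fun i => v i = y := by
    ext i
    simp only [mem_filter, mem_univ, true_and]
    exact ⟨fun h => h.2, fun h => ⟨fun hx' => hxy (hx'.symm.trans h), h⟩⟩
  have e2 : ((univ.filter fun i => ¬v i = x).filter fun i => ¬v i = y) =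
      univ.filter fun i => ¬v i = x ∧ ¬v i = y := by
    rw [Finset.filter_filter]
  have key : ∀ t, ∏ i, upd f x y t (v i) = (f x + t) ^ m * ((f y - t) ^ n * P) := by
    intro t
    rw [← Finset.prod_filter_mul_prod_filter_not univ (fun i => v i = x),
        ← Finset.prod_filter_mul_prod_filter_not (univ.filter fun i => ¬v i = x)
          (fun i => v i = y), e1, e2]
    congr 1
    · rw [Finset.prod_congr rfl (g := fun _ => f x + t)
        (fun i hi => by
          have := (mem_filter.mp hi).2
          simp only [upd, this, if_pos]), Finset.prod_const, hm]
    congr 1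
    · rw [Finset.prod_congr rfl (g := fun _ => f y - t)
        (fun i hi => by
          have h2 := (mem_filter.mp hi).2
          have h1 : ¬ v i = x := fun hx' => hxy (hx'.symm.trans h2)
          simp [upd, h1, h2, Ne.symm hxy]), Finset.prod_const, hn]
    · exact Finset.prod_congr rfl fun i hi => by
        have h12 := (mem_filter.mp hi).2
        simp only [upd, if_neg h12.1, if_neg h12.2]
  have key0 : ∏ i, f (v i) = f x ^ m * (f y ^ n * P) := by
    have h := key 0
    simp only [upd, add_zero, sub_zero] at h
    rw [← h]
    exact Finset.prod_congr rfl fun i _ => by split_ifs with h1 h2 <;> simp_all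
  have hm1 : m ≤ 1 := Finset.card_le_one.mpr fun i hi j hj =>
    hv ((mem_filter.mp hi).2.trans (mem_filter.mp hj).2.symm)
  have hn1 : n ≤ 1 := Finset.card_le_one.mpr fun i hi j hj =>
    hv ((mem_filter.mp hi).2.trans (mem_filter.mp hj).2.symm)
  rcases Nat.le_one_iff_eq_zero_or_eq_one.mp hm1 with hm0 | hm0 <;>
    rcases Nat.le_one_iff_eq_zero_or_eq_one.mp hn1 with hn0 | hn0
  · exact ⟨0, 0, le_rfl, fun t => by rw [key t, key0, hm0, hn0]; ring⟩
  · exact ⟨-P, 0, le_rfl, fun t => by rw [key t, key0, hm0, hn0]; ring⟩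
  · exact ⟨P, 0, le_rfl, fun t => by rw [key t, key0, hm0, hn0]; ring⟩
  · exact ⟨(f y - f x) * P, -P, neg_nonpos.mpr hPnn, fun t => by
      rw [key t, key0, hm0, hn0]; ring⟩

private noncomputable def badSet (f : G → ℝ) : Finset G := univ.filter fun z => f z ≠ 0 ∧ f z ≠ 1

private lemma build (f : G → ℝ) (hf : ∀ z, f z ∈ Set.Icc (0 : ℝ) 1) (x y : G) (hxy : x ≠ y)
    (hx : x ∈ badSet f) (hy : y ∈ badSet f) (t : ℝ)
    (h1 : 0 ≤ f x + t) (h2 : f x + t ≤ 1) (h3 : 0 ≤ f y - t) (h4 : f y - t ≤ 1)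
    (hend : f x + t = 0 ∨ f x + t = 1 ∨ f y - t = 0 ∨ f y - t = 1) :
    (∀ z, upd f x y t z ∈ Set.Icc (0 : ℝ) 1) ∧ (∑ z, upd f x y t z = ∑ z, f z) ∧
      (badSet (upd f x y t)).card < (badSet f).card := by
  have hgx : upd f x y t x = f x + t := by simp [upd]
  have hgy : upd f x y t y = f y - t := by simp [upd, Ne.symm hxy]
  have hgz : ∀ z, z ≠ x → z ≠ y → upd f x y t z = f z := by
    intro z hzx hzy; simp [upd, hzx, hzy]
  refine ⟨?_, ?_, ?_⟩
  · intro z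
    unfold upd
    split_ifs with hz1 hz2
    · exact ⟨h1, h2⟩
    · exact ⟨h3, h4⟩
    · exact hf z
  · have hform : ∀ z, upd f x y t z =
        f z + (if z = x then t else 0) - (if z = y then t else 0) := by
      intro z
      unfold upd
      split_ifs with hz1 hz2 <;> simp_all
    rw [Finset.sum_congr rfl fun z _ => hform z]
    simp [Finset.sum_add_distrib, Finset.sum_sub_distrib, Finset.sum_ite_eq']
  · apply Finset.card_lt_card
    have hsub : badSet (upd f x y t) ⊆ badSet f := by
      intro z hz
      rw [badSet, mem_filter] at hz
      by_cases hzx : z = x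
      · rwa [hzx]
      by_cases hzy : z = y
      · rwa [hzy]
      · rw [badSet, mem_filter]
        rw [hgz z hzx hzy] at hz
        exact ⟨mem_univ z, hz.2⟩
    rw [Finset.ssubset_iff_of_subset hsub]
    rcases hend with h | h | h | h
    · exact ⟨x, hx, by rw [badSet, mem_filter]; push_neg; intro _ h0; exact absurd (hgx.trans h) h0⟩
    · exact ⟨x, hx, by rw [badSet, mem_filter]; push_neg; intro _ h0; exact (hgx.trans h)⟩
    · exact ⟨y, hy, by rw [badSet, mem_filter]; push_neg; intro _ h0; exact absurd (hgy.trans h) h0⟩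
    · exact ⟨y, hy, by rw [badSet, mem_filter]; push_neg; intro _ h0; exact (hgy.trans h)⟩

private lemma step {k d : ℕ} (L : Matrix (Fin k) (Fin d) ℤ) (f : G → ℝ)
    (hf : ∀ z, f z ∈ Set.Icc (0 : ℝ) 1) (x y : G) (hxy : x ≠ y)
    (hx : x ∈ badSet f) (hy : y ∈ badSet f) :
    ∃ g : G → ℝ, (∀ z, g z ∈ Set.Icc (0 : ℝ) 1) ∧ (∑ z, g z = ∑ z, f z) ∧
      (badSet g).card < (badSet f).card ∧
      ∑ v ∈ config (G := G) L \ nonInj (G := G) L, ∏ i, g (v i) ≤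
        ∑ v ∈ config (G := G) L \ nonInj (G := G) L, ∏ i, f (v i) := by
  classical
  obtain ⟨-, hx0, hx1⟩ : x ∈ univ ∧ f x ≠ 0 ∧ f x ≠ 1 := by
    simpa [badSet] using hx
  obtain ⟨-, hy0, hy1⟩ : y ∈ univ ∧ f y ≠ 0 ∧ f y ≠ 1 := by
    simpa [badSet] using hy
  have hfx0 : 0 < f x := lt_of_le_of_ne (hf x).1 (Ne.symm hx0)
  have hfx1 : f x < 1 := lt_of_le_of_ne (hf x).2 hx1
  have hfy0 : 0 < f y := lt_of_le_of_ne (hf y).1 (Ne.symm hy0)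
  have hfy1 : f y < 1 := lt_of_le_of_ne (hf y).2 hy1
  set a := max (-(f x)) (f y - 1) with hadef
  set b := min (1 - f x) (f y) with hbdef
  have ha0 : a ≤ 0 := max_le (by linarith) (by linarith)
  have hb0 : 0 ≤ b := le_min (by linarith) (by linarith)
  have ha1 : -(f x) ≤ a := le_max_left _ _
  have ha2 : f y - 1 ≤ a := le_max_right _ _
  have hb1 : b ≤ 1 - f x := min_le_left _ _
  have hb2 : b ≤ f y := min_le_right _ _
  have hinj : ∀ v ∈ config (G := G) L \ nonInj (G := G) L, Function.Injective v := by
    intro v hv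
    rw [Finset.mem_sdiff] at hv
    intro i j hij
    by_contra hne
    exact hv.2 (by rw [nonInj, mem_filter]; exact ⟨hv.1, i, j, hne, hij⟩)
  obtain ⟨B, C, hC, hQ⟩ := quad_sum (config (G := G) L \ nonInj (G := G) L)
    (fun v t => ∏ i, upd f x y t (v i)) (fun v hv => by
      obtain ⟨b', c', hc', hform⟩ := prod_upd f (fun z => (hf z).1) x y hxy v (hinj v hv)
      exact ⟨b', c', hc', fun t => by simp only [upd_zero]; exact hform t⟩)
  have hmin := endpoint_min _ B C a b hC ha0 hb0 hQ
  simp only [upd_zero] at hmin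
  rcases hmin with hle | hle
  · have hend : f x + a = 0 ∨ f x + a = 1 ∨ f y - a = 0 ∨ f y - a = 1 := by
      rcases max_choice (-(f x)) (f y - 1) with h | h
      · left; rw [hadef, h]; ring
      · right; right; right; rw [hadef, h]; ring
    obtain ⟨hr, hs, hc⟩ := build f hf x y hxy hx hy a (by linarith) (by linarith)
      (by linarith) (by linarith) hend
    exact ⟨upd f x y a, hr, hs, hc, hle⟩
  · have hend : f x + b = 0 ∨ f x + b = 1 ∨ f y - b = 0 ∨ f y - b = 1 := by
      rcases min_choice (1 - f x) (f y) with h | h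
      · right; left; rw [hbdef, h]; ring
      · right; right; left; rw [hbdef, h]; ring
    obtain ⟨hr, hs, hc⟩ := build f hf x y hxy hx hy b (by linarith) (by linarith)
      (by linarith) (by linarith) hend
    exact ⟨upd f x y b, hr, hs, hc, hle⟩

private lemma aux_ind {k d : ℕ} (L : Matrix (Fin k) (Fin d) ℤ) :
    ∀ (n : ℕ) (f : G → ℝ), (∀ z, f z ∈ Set.Icc (0 : ℝ) 1) → (badSet f).card ≤ n →
      ∃ g : G → ℝ, (∀ z, g z ∈ Set.Icc (0 : ℝ) 1) ∧ (∑ z, g z = ∑ z, f z) ∧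
        (badSet g).card ≤ 1 ∧
        ∑ v ∈ config (G := G) L \ nonInj (G := G) L, ∏ i, g (v i) ≤
          ∑ v ∈ config (G := G) L \ nonInj (G := G) L, ∏ i, f (v i) := by
  intro n
  induction n with
  | zero => exact fun f hf h => ⟨f, hf, rfl, h.trans (by norm_num), le_rfl⟩
  | succ n ih =>
    intro f hf hcard
    by_cases h1 : (badSet f).card ≤ 1
    · exact ⟨f, hf, rfl, h1, le_rfl⟩
    · push_neg at h1
      obtain ⟨x, hx, y, hy, hxy⟩ := Finset.one_lt_card.mp h1
      obtain ⟨g, hg, hsum, hlt, hS⟩ := step L f hf x y hxy hx hy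
      obtain ⟨g', hg', hsum', hcard', hS'⟩ := ih g hg (by omega)
      exact ⟨g', hg', hsum'.trans hsum, hcard', hS'.trans hS⟩

/-- For any `f : G → [0,1]` there is `g : G → [0,1]` with the same average, taking values in
`{0,1}` at all but at most one point, and with
`∑_{v ∈ C^inj(L)} ∏ i, g(v_i) ≤ ∑_{v ∈ C^inj(L)} ∏ i, f(v_i)`, where
`C^inj(L) = C(L) ∖ C^#(L)` is the set of injective instances. -/
theorem exists_almost_indicator_minimizer {k d : ℕ} (L : Matrix (Fin k) (Fin d) ℤ)
    (f : G → ℝ) (hf : ∀ x, f x ∈ Set.Icc (0 : ℝ) 1) :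
    ∃ g : G → ℝ, (∀ x, g x ∈ Set.Icc (0 : ℝ) 1) ∧ avg g = avg f ∧
      {x : G | g x ≠ 0 ∧ g x ≠ 1}.Subsingleton ∧
      ∑ v ∈ config (G := G) L \ nonInj (G := G) L, ∏ i, g (v i) ≤
        ∑ v ∈ config (G := G) L \ nonInj (G := G) L, ∏ i, f (v i) := by
  obtain ⟨g, hg, hsum, hcard, hS⟩ := aux_ind L (badSet f).card f hf le_rfl
  refine ⟨g, hg, ?_, ?_, hS⟩
  · unfold avg; rw [hsum]
  · intro a ha b hb
    exact Finset.card_le_one.mp hcard a (by simpa [badSet] using ha)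
      b (by simpa [badSet] using hb)
end
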